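/- arXiv:math/0410598 — 6 statements merged into one kernel-verified Lean document; each statement's English description precedes it below -/
import Mathlib

section
/- If 0 → L → M → N → 0 is a short exact sequence of R-modules over a commutative Noetherian ring R, then M is weakly Laskerian if and only if both L and N are weakly Laskerian. -/
/-- An `R`-module `M` is weakly Laskerian if every quotient of `M`
has finitely many associated primes. -/
def WeaklyLaskerian (R M : Type*) [CommRing R] [AddCommGroup M] [Module R M] : Prop :=
  ∀ N : Submodule R M, (associatedPrimes R (M ⧸ N)).Finite

/-- Associated primes in the middle of an exact sequence are contained in the
union of the associated primes of the two ends. -/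
lemma associatedPrimes_subset_union_of_exact
    {R L M N : Type*} [CommRing R]
    [AddCommGroup L] [Module R L] [AddCommGroup M] [Module R M]
    [AddCommGroup N] [Module R N]
    (f : L →ₗ[R] M) (g : M →ₗ[R] N)
    (hf : Function.Injective f) (hfg : Function.Exact f g) :
    associatedPrimes R M ⊆ associatedPrimes R L ∪ associatedPrimes R N := by
  exact associatedPrimes.subset_union_of_exact hf hfg

theorem weaklyLaskerian_of_shortExact
    {R L M N : Type*} [CommRing R] [IsNoetherianRing R]
    [AddCommGroup L] [Module R L] [AddCommGroup M] [Module R M]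
    [AddCommGroup N] [Module R N]
    (f : L →ₗ[R] M) (g : M →ₗ[R] N)
    (hf : Function.Injective f) (hg : Function.Surjective g)
    (hfg : Function.Exact f g) :
    WeaklyLaskerian R M ↔ WeaklyLaskerian R L ∧ WeaklyLaskerian R N := by
  constructor
  · intro hM
    constructor
    · intro P
      have hinj : Function.Injective
          (Submodule.mapQ P (P.map f) f (Submodule.le_comap_map f P)) := by
        rw [← LinearMap.ker_eq_bot, eq_bot_iff]
        rintro y hy
        obtain ⟨l, rfl⟩ := Submodule.Quotient.mk_surjective P y
        rw [LinearMap.mem_ker, Submodule.mapQ_apply, Submodule.Quotient.mk_eq_zero] at hy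
        obtain ⟨l', hl', hfl⟩ := hy
        rw [Submodule.mem_bot, Submodule.Quotient.mk_eq_zero]
        rwa [← hf hfl]
      exact (hM (P.map f)).subset fun p hp => hp.map_of_injective _ hinj
    · intro Q
      have hker : LinearMap.ker (Q.mkQ.comp g) = Q.comap g := by
        rw [LinearMap.ker_comp, Submodule.ker_mkQ]
      have hsurj : Function.Surjective (Q.mkQ.comp g) :=
        (Q.mkQ_surjective).comp hg
      have e : (M ⧸ Q.comap g) ≃ₗ[R] N ⧸ Q := by
        rw [← hker]; exact (Q.mkQ.comp g).quotKerEquivOfSurjective hsurj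
      exact (hM (Q.comap g)).subset fun p hp => e.isAssociatedPrime_iff.mpr hp
  · rintro ⟨hL, hN⟩ P
    set f' := Submodule.mapQ (P.comap f) P f le_rfl with hf'
    set g' := Submodule.mapQ P (P.map g) g (Submodule.le_comap_map g P) with hg'
    have hinj : Function.Injective f' := by
      rw [← LinearMap.ker_eq_bot, eq_bot_iff]
      rintro y hy
      obtain ⟨l, rfl⟩ := Submodule.Quotient.mk_surjective _ y
      rw [LinearMap.mem_ker, hf', Submodule.mapQ_apply, Submodule.Quotient.mk_eq_zero] at hy
      rw [Submodule.mem_bot, Submodule.Quotient.mk_eq_zero]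
      exact hy
    have hexact : Function.Exact f' g' := by
      intro y
      obtain ⟨m, rfl⟩ := Submodule.Quotient.mk_surjective P y
      rw [hg', Submodule.mapQ_apply, Submodule.Quotient.mk_eq_zero]
      constructor
      · rintro ⟨q, hq, hgq⟩
        have : g (m - q) = 0 := by rw [map_sub, hgq, sub_self]
        obtain ⟨l, hl⟩ := (hfg (m - q)).mp this
        refine ⟨Submodule.Quotient.mk l, ?_⟩
        rw [hf', Submodule.mapQ_apply, hl]
        rw [Submodule.Quotient.mk_sub, sub_eq_self, Submodule.Quotient.mk_eq_zero]
        exact hq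
      · rintro ⟨z, hz⟩
        obtain ⟨l, rfl⟩ := Submodule.Quotient.mk_surjective _ z
        rw [hf', Submodule.mapQ_apply, Submodule.Quotient.eq] at hz
        refine ⟨m - f l, by simpa using P.neg_mem hz, ?_⟩
        rw [map_sub, (hfg (f l)).mpr ⟨l, rfl⟩, sub_zero]
    refine ((hL (P.comap f)).union (hN (P.map g))).subset ?_
    exact associatedPrimes_subset_union_of_exact f' g' hinj hexact
end

section
/- If M is a weakly Laskerian R-module and N is a finitely generated R-module, then Ext^i_R(N, M) is weakly Laskerian for all i ≥ 0. -/
open CategoryTheory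

section WL
variable {R : Type} [CommRing R] {A B : Type} [AddCommGroup A] [Module R A]
  [AddCommGroup B] [Module R B]

lemma wl_of_equiv (e : A ≃ₗ[R] B) (h : WeaklyLaskerian R A) : WeaklyLaskerian R B := by
  intro N
  have e2 : (A ⧸ N.comap (e : A →ₗ[R] B)) ≃ₗ[R] (B ⧸ N) :=
    Submodule.Quotient.equiv _ _ e (Submodule.map_comap_eq_of_surjective e.surjective N)
  rw [← LinearEquiv.AssociatedPrimes.eq e2]
  exact h _


lemma wl_quotient (h : WeaklyLaskerian R A) (N : Submodule R A) :
    WeaklyLaskerian R (A ⧸ N) := by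
  intro P
  have e := Submodule.quotientQuotientEquivQuotient N (P.comap N.mkQ)
    (fun x hx => by
      simp only [Submodule.mem_comap, Submodule.mkQ_apply,
        (Submodule.Quotient.mk_eq_zero N).2 hx]
      exact P.zero_mem)
  rw [Submodule.map_comap_eq_of_surjective (Submodule.mkQ_surjective N) P] at e
  rw [LinearEquiv.AssociatedPrimes.eq e]
  exact h _


lemma wl_submodule (h : WeaklyLaskerian R A) (S : Submodule R A) :
    WeaklyLaskerian R S := by
  intro N
  have hmap : ∀ x ∈ N, S.subtype x ∈ N.map S.subtype := fun x hx =>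
    Submodule.mem_map_of_mem hx
  set f := Submodule.mapQ N (N.map S.subtype) S.subtype hmap with hf
  have hker : LinearMap.ker f = ⊥ := by
    rw [hf, Submodule.mapQ, Submodule.ker_liftQ, LinearMap.ker_comp, Submodule.ker_mkQ,
      Submodule.comap_map_eq_of_injective (Submodule.injective_subtype S)]
    rw [eq_bot_iff]
    rintro x hx
    obtain ⟨y, hy, rfl⟩ := hx
    simpa [Submodule.mem_bot, Submodule.Quotient.mk_eq_zero] using hy
  have hinj : Function.Injective f := LinearMap.ker_eq_bot.1 hker
  exact Set.Finite.subset (h (N.map S.subtype)) (associatedPrimes.subset_of_injective hinj)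

lemma assocPrimes_subset_union [IsNoetherianRing R] (S : Submodule R A) :
    associatedPrimes R A ⊆ associatedPrimes R S ∪ associatedPrimes R (A ⧸ S) := by
  intro p hp'
  obtain ⟨hp, x, hx⟩ := isAssociatedPrime_iff.1 hp'
  have hmem : ∀ s : R, s ∈ p ↔ s • x = 0 := fun s => by
    rw [hx, Submodule.mem_colon_singleton, Submodule.mem_bot]
  by_cases h : ∃ r : R, r • x ∈ S ∧ r • x ≠ 0
  · obtain ⟨r, hrS, hr0⟩ := h
    have hrp : r ∉ p := fun hc => hr0 ((hmem r).1 hc)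
    left
    refine isAssociatedPrime_iff.2 ⟨hp, ⟨⟨r • x, hrS⟩, ?_⟩⟩
    ext s
    rw [Submodule.mem_colon_singleton, Submodule.mem_bot]
    constructor
    · intro hs
      refine Subtype.ext ?_
      show s • (r • x) = 0
      rw [smul_comm, (hmem s).1 hs, smul_zero]
    · intro hs
      have h2 : s • (r • x) = 0 := congrArg Subtype.val hs
      have h3 : (s * r) • x = 0 := by rwa [mul_smul]
      exact (hp.mem_or_mem ((hmem _).2 h3)).resolve_right hrp
  · push_neg at h
    right
    refine isAssociatedPrime_iff.2 ⟨hp, ⟨Submodule.Quotient.mk x, ?_⟩⟩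
    ext s
    rw [Submodule.mem_colon_singleton, Submodule.mem_bot, ← Submodule.Quotient.mk_smul,
      Submodule.Quotient.mk_eq_zero]
    constructor
    · intro hs
      rw [(hmem s).1 hs]
      exact S.zero_mem
    · intro hs
      exact (hmem s).2 (h s hs)


lemma wl_of_sub_quot [IsNoetherianRing R] (S : Submodule R A) (h1 : WeaklyLaskerian R S)
    (h2 : WeaklyLaskerian R (A ⧸ S)) : WeaklyLaskerian R A := by
  intro N
  refine Set.Finite.subset (Set.Finite.union ?_ ?_)
    (assocPrimes_subset_union (S.map N.mkQ))
  · -- associated primes of the image of S in A ⧸ N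
    set f : S →ₗ[R] (A ⧸ N) := N.mkQ ∘ₗ S.subtype with hf
    have hrange : LinearMap.range f = S.map N.mkQ := by
      rw [hf, LinearMap.range_comp, Submodule.range_subtype]
    have e : (S ⧸ LinearMap.ker f) ≃ₗ[R] (S.map N.mkQ) :=
      (f.quotKerEquivRange).trans (LinearEquiv.ofEq _ _ hrange)
    rw [← LinearEquiv.AssociatedPrimes.eq e]
    exact h1 _
  · have e1 := Submodule.quotientQuotientEquivQuotientSup N S
    have e2 := Submodule.quotientQuotientEquivQuotientSup S N
    rw [sup_comm] at e2
    have e : ((A ⧸ N) ⧸ S.map N.mkQ) ≃ₗ[R] ((A ⧸ S) ⧸ N.map S.mkQ) :=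
      e1.trans e2.symm
    rw [LinearEquiv.AssociatedPrimes.eq e]
    exact h2 _

lemma wl_of_subsingleton [Subsingleton A] : WeaklyLaskerian R A := by
  intro N
  haveI : Subsingleton (A ⧸ N) := (Submodule.mkQ_surjective N).subsingleton
  rw [associatedPrimes.eq_empty_of_subsingleton]
  exact Set.finite_empty

lemma wl_prod [IsNoetherianRing R] (hA : WeaklyLaskerian R A) (hB : WeaklyLaskerian R B) :
    WeaklyLaskerian R (A × B) := by
  apply wl_of_sub_quot (LinearMap.range (LinearMap.inl R A B))
  · exact wl_of_equiv (LinearEquiv.ofInjective (LinearMap.inl R A B) LinearMap.inl_injective) hA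
  · have hk : LinearMap.range (LinearMap.inl R A B) = LinearMap.ker (LinearMap.snd R A B) := by
      ext ⟨a, b⟩
      simp [LinearMap.mem_range, Prod.ext_iff, eq_comm]
    have e : ((A × B) ⧸ LinearMap.range (LinearMap.inl R A B)) ≃ₗ[R] B :=
      (Submodule.quotEquivOfEq _ _ hk).trans
        (LinearMap.quotKerEquivOfSurjective _ (fun b => ⟨(0, b), rfl⟩))
    exact wl_of_equiv e.symm hB

lemma wl_pi [IsNoetherianRing R] (hA : WeaklyLaskerian R A) : ∀ k : ℕ, WeaklyLaskerian R (Fin k → A)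
  | 0 => wl_of_subsingleton
  | (k+1) => by
    have e : (Fin (k+1) → A) ≃ₗ[R] (A × (Fin k → A)) :=
      (LinearEquiv.funCongrLeft R A (finSumFinEquiv.trans (finCongr (Nat.add_comm 1 k)))).trans
        ((LinearEquiv.sumArrowLequivProdArrow (Fin 1) (Fin k) R A).trans
          ((LinearEquiv.funUnique (Fin 1) R A).prodCongr (LinearEquiv.refl R (Fin k → A))))
    exact wl_of_equiv e.symm (wl_prod hA (wl_pi hA k))

end WL

section Resolution
variable (R : Type) [CommRing R] [IsNoetherianRing R]

structure FGMod where
  carrier : Type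
  [acg : AddCommGroup carrier]
  [mod : Module R carrier]
  [fin : Module.Finite R carrier]

attribute [instance] FGMod.acg FGMod.mod FGMod.fin

variable {R}

noncomputable def genCount (P : FGMod R) : ℕ :=
  (Module.Finite.exists_fin' R P.carrier).choose

noncomputable def genMap (P : FGMod R) : (Fin (genCount P) → R) →ₗ[R] P.carrier :=
  (Module.Finite.exists_fin' R P.carrier).choose_spec.choose

lemma genMap_surjective (P : FGMod R) : Function.Surjective (genMap P) :=
  (Module.Finite.exists_fin' R P.carrier).choose_spec.choose_spec

noncomputable def step (P : FGMod R) : FGMod R :=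
  ⟨LinearMap.ker (genMap P)⟩

noncomputable def syz (N0 : FGMod R) : ℕ → FGMod R
  | 0 => N0
  | (n+1) => step (syz N0 n)

variable (N0 : FGMod R)

noncomputable def resComplex : ChainComplex (ModuleCat.{0} R) ℕ :=
  ChainComplex.of
    (fun n => ModuleCat.of R (Fin (genCount (syz N0 n)) → R))
    (fun n => ModuleCat.ofHom
      ((LinearMap.ker (genMap (syz N0 n))).subtype ∘ₗ genMap (syz N0 (n+1))))
    (fun n => by
      refine ModuleCat.hom_ext (LinearMap.ext fun x => ?_)
      show (LinearMap.ker (genMap (syz N0 n))).subtype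
            (genMap (syz N0 (n+1)) ((LinearMap.ker (genMap (syz N0 (n+1)))).subtype
              (genMap (syz N0 (n+2)) x))) = 0
      have h2 := LinearMap.mem_ker.mp (genMap (syz N0 (n+2)) x).2
      exact (congrArg (LinearMap.ker (genMap (syz N0 n))).subtype h2).trans (map_zero _))

lemma resComplex_d (n : ℕ) :
    (resComplex N0).d (n+1) n = ModuleCat.ofHom
      ((LinearMap.ker (genMap (syz N0 n))).subtype ∘ₗ genMap (syz N0 (n+1))) :=
  by unfold resComplex; simp

lemma resComplex_exactAt_succ (n : ℕ) : (resComplex N0).ExactAt (n+1) := by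
  rw [HomologicalComplex.exactAt_iff' _ (n+2) (n+1) n (by simp) (by simp)]
  rw [ShortComplex.moduleCat_exact_iff]
  intro x hx
  have hx2 : (resComplex N0).d (n+1) n x = 0 := hx
  rw [resComplex_d] at hx2
  have hmem : x ∈ LinearMap.ker (genMap (syz N0 (n+1))) := by
    have h0 : (LinearMap.ker (genMap (syz N0 n))).subtype (genMap (syz N0 (n+1)) x) = 0 := hx2
    show genMap (syz N0 (n+1)) x = 0
    exact Subtype.ext h0
  obtain ⟨y, hy⟩ := genMap_surjective (syz N0 (n+2))
    (⟨x, hmem⟩ : LinearMap.ker (genMap (syz N0 (n+1))))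
  refine ⟨y, ?_⟩
  show (resComplex N0).d (n+2) (n+1) y = x
  rw [resComplex_d]
  show (LinearMap.ker (genMap (syz N0 (n+1)))).subtype (genMap (syz N0 (n+2)) y) = x
  rw [hy]
  rfl

lemma resComplex_d_comp_gen :
    (resComplex N0).d 1 0 ≫ ModuleCat.ofHom (genMap (syz N0 0)) = 0 := by
  rw [resComplex_d]
  ext x : 2
  show genMap (syz N0 0)
    ((LinearMap.ker (genMap (syz N0 0))).subtype (genMap (syz N0 1) x)) = 0
  exact LinearMap.mem_ker.mp (genMap (syz N0 1) x).2

noncomputable def res : ProjectiveResolution (ModuleCat.of R N0.carrier) where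
  complex := resComplex N0
  projective n := ModuleCat.projective_of_free (Pi.basisFun R (Fin (genCount (syz N0 n))))
  π := (ChainComplex.toSingle₀Equiv _ _).symm
    ⟨ModuleCat.ofHom (genMap (syz N0 0)), resComplex_d_comp_gen N0⟩
  quasiIso := ⟨fun n => by
    cases n with
    | zero =>
      rw [ChainComplex.quasiIsoAt₀_iff, ShortComplex.quasiIso_iff_of_zeros']
      · have hπ : (((ChainComplex.toSingle₀Equiv (resComplex N0)
            (ModuleCat.of R N0.carrier)).symm
            ⟨ModuleCat.ofHom (genMap (syz N0 0)), resComplex_d_comp_gen N0⟩)).f 0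
            = ModuleCat.ofHom (genMap (syz N0 0)) :=
          ChainComplex.toSingle₀Equiv_symm_apply_f_zero _ _
        constructor
        · rw [ShortComplex.moduleCat_exact_iff]
          intro x hx
          change ((((ChainComplex.toSingle₀Equiv (resComplex N0)
              (ModuleCat.of R N0.carrier)).symm
              ⟨ModuleCat.ofHom (genMap (syz N0 0)), resComplex_d_comp_gen N0⟩)).f 0) x = 0 at hx
          rw [hπ] at hx
          have hmem : (@id (Fin (genCount (syz N0 0)) → R) x) ∈ LinearMap.ker (genMap (syz N0 0)) :=
            LinearMap.mem_ker.mpr hx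
          obtain ⟨y, hy⟩ := genMap_surjective (syz N0 1)
            (⟨x, hmem⟩ : LinearMap.ker (genMap (syz N0 0)))
          refine ⟨y, ?_⟩
          show (resComplex N0).d 1 0 y = x
          rw [resComplex_d]
          show (LinearMap.ker (genMap (syz N0 0))).subtype (genMap (syz N0 1) y) = x
          rw [hy]
          rfl
        · change Epi ((((ChainComplex.toSingle₀Equiv (resComplex N0)
              (ModuleCat.of R N0.carrier)).symm
              ⟨ModuleCat.ofHom (genMap (syz N0 0)), resComplex_d_comp_gen N0⟩)).f 0)
          rw [hπ]
          exact (ModuleCat.epi_iff_surjective _).2 (genMap_surjective (syz N0 0))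
      all_goals rfl
    | succ n =>
      rw [quasiIsoAt_iff_exactAt']
      · exact resComplex_exactAt_succ N0 n
      · apply ChainComplex.exactAt_succ_single_obj⟩

end Resolution

/-- If `M` is weakly Laskerian and `N` is finitely generated, then
`Ext^i_R(N, M)` is weakly Laskerian for all `i ≥ 0`. -/
theorem weaklyLaskerian_ext
    {R : Type} [CommRing R] [IsNoetherianRing R]
    {M N : Type} [AddCommGroup M] [Module R M] [AddCommGroup N] [Module R N]
    (hM : WeaklyLaskerian R M) (hN : Module.Finite R N) (i : ℕ) :
    WeaklyLaskerian R
      (((Ext R (ModuleCat.{0} R) i).obj (Opposite.op (ModuleCat.of R N))).obj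
        (ModuleCat.of R M)) := by
  haveI := hN
  let N0 : FGMod R := ⟨N⟩
  let P := res N0
  let C := P.complex.linearYonedaObj R (ModuleCat.of R M)
  have e : (((Ext R (ModuleCat.{0} R) i).obj (Opposite.op (ModuleCat.of R N))).obj
        (ModuleCat.of R M)) ≃ₗ[R] ((C.sc i).moduleCatLeftHomologyData.H) :=
    ((P.isoExt i (ModuleCat.of R M)) ≪≫ (C.sc i).moduleCatHomologyIso).toLinearEquiv
  refine wl_of_equiv e.symm ?_
  refine wl_quotient (wl_submodule ?_ _) _
  have h2 : WeaklyLaskerian R ((Fin (genCount (syz N0 i)) → R) →ₗ[R] M) :=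
    wl_of_equiv (LinearEquiv.piRing R M (Fin (genCount (syz N0 i))) R).symm (wl_pi hM _)
  exact wl_of_equiv (ModuleCat.homLinearEquiv (S := R)).symm h2
end

section
/- If M is a weakly Laskerian R-module and N is a finitely generated R-module, then Tor^R_i(N, M) is weakly Laskerian for all i ≥ 0. -/
open CategoryTheory

theorem associatedPrimes_subset_union {R X : Type*} [CommRing R] [IsNoetherianRing R]
    [AddCommGroup X] [Module R X]
    (S : Submodule R X) :
    associatedPrimes R X ⊆ associatedPrimes R S ∪ associatedPrimes R (X ⧸ S) := by
  intro p hp'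
  obtain ⟨hp, x, rfl⟩ := isAssociatedPrime_iff.1 hp'
  by_cases h : ∃ r : R, r • x ≠ 0 ∧ r • x ∈ S
  · obtain ⟨r, hr, hrx⟩ := h
    left
    refine isAssociatedPrime_iff.2 ⟨hp, ⟨r • x, hrx⟩, ?_⟩
    ext s
    simp only [Submodule.mem_colon_singleton, Submodule.mem_bot]
    constructor
    · intro hs
      apply Subtype.ext
      show s • (r • x) = 0
      rw [smul_comm, hs, smul_zero]
    · intro hs
      have h2 : (s * r) • x = 0 := by
        rw [mul_smul]; exact congrArg Subtype.val hs
      have h3 : s * r ∈ (⊥ : Submodule R X).colon {x} := by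
        rw [Submodule.mem_colon_singleton, Submodule.mem_bot]; exact h2
      rcases hp.mem_or_mem h3 with h' | h'
      · exact (Submodule.mem_bot R).mp (Submodule.mem_colon_singleton.mp h')
      · exact absurd ((Submodule.mem_bot R).mp (Submodule.mem_colon_singleton.mp h')) hr
  · push_neg at h
    right
    refine isAssociatedPrime_iff.2 ⟨hp, Submodule.Quotient.mk x, ?_⟩
    ext s
    simp only [Submodule.mem_colon_singleton, Submodule.mem_bot]
    rw [← Submodule.Quotient.mk_smul, Submodule.Quotient.mk_eq_zero]
    constructor
    · intro hs; rw [hs]; exact S.zero_mem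
    · intro hs
      by_contra hne
      exact h s hne hs


section WL
variable {R X Y : Type*} [CommRing R] [AddCommGroup X] [Module R X]
  [AddCommGroup Y] [Module R Y]

theorem WeaklyLaskerian.of_surjective (hX : WeaklyLaskerian R X) (f : X →ₗ[R] Y)
    (hf : Function.Surjective f) : WeaklyLaskerian R Y := by
  intro N
  have hle : Submodule.comap f N ≤ Submodule.comap f N := le_rfl
  set g := Submodule.mapQ (Submodule.comap f N) N f le_rfl with hg
  have hgs : Function.Surjective g := by
    intro y
    obtain ⟨y', rfl⟩ := Submodule.mkQ_surjective N y
    obtain ⟨x, rfl⟩ := hf y'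
    exact ⟨Submodule.Quotient.mk x, rfl⟩
  have hgi : Function.Injective g := by
    rw [← LinearMap.ker_eq_bot, Submodule.eq_bot_iff]
    intro q hq
    obtain ⟨x, rfl⟩ := Submodule.mkQ_surjective _ q
    have : f x ∈ N := by
      simpa [hg, Submodule.Quotient.mk_eq_zero] using hq
    simpa [Submodule.Quotient.mk_eq_zero] using this
  rw [LinearEquiv.AssociatedPrimes.eq (LinearEquiv.ofBijective g ⟨hgi, hgs⟩).symm]
  exact hX _

theorem WeaklyLaskerian.of_injective (hY : WeaklyLaskerian R Y) (f : X →ₗ[R] Y)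
    (hf : Function.Injective f) : WeaklyLaskerian R X := by
  intro N
  set g := Submodule.mapQ N (N.map f) f (Submodule.le_comap_map f N) with hg
  have hgi : Function.Injective g := by
    rw [← LinearMap.ker_eq_bot, Submodule.eq_bot_iff]
    intro q hq
    obtain ⟨x, rfl⟩ := Submodule.mkQ_surjective _ q
    have : f x ∈ N.map f := by
      simpa [hg, Submodule.Quotient.mk_eq_zero] using hq
    obtain ⟨n, hn, hnx⟩ := this
    rw [Submodule.mkQ_apply, Submodule.Quotient.mk_eq_zero]
    rwa [← hf hnx]
  exact Set.Finite.subset (hY (N.map f)) (associatedPrimes.subset_of_injective hgi)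

theorem WeaklyLaskerian.of_equiv (hX : WeaklyLaskerian R X) (e : X ≃ₗ[R] Y) :
    WeaklyLaskerian R Y :=
  hX.of_surjective e.toLinearMap e.surjective

theorem WeaklyLaskerian.finite_associatedPrimes (hX : WeaklyLaskerian R X) :
    (associatedPrimes R X).Finite := by
  have := hX ⊥
  rwa [LinearEquiv.AssociatedPrimes.eq (Submodule.quotEquivOfEqBot ⊥ rfl)] at this

theorem WeaklyLaskerian.prod [IsNoetherianRing R] (hX : WeaklyLaskerian R X) (hY : WeaklyLaskerian R Y) :
    WeaklyLaskerian R (X × Y) := by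
  intro N
  set g : X →ₗ[R] (X × Y) ⧸ N := N.mkQ.comp (LinearMap.inl R X Y) with hgdef
  set S := LinearMap.range g with hS
  have finS : (associatedPrimes R S).Finite :=
    ((hX.of_surjective g.rangeRestrict (LinearMap.surjective_rangeRestrict g)).finite_associatedPrimes)
  set h : Y →ₗ[R] ((X × Y) ⧸ N) ⧸ S := S.mkQ.comp (N.mkQ.comp (LinearMap.inr R X Y)) with hhdef
  have hhs : Function.Surjective h := by
    intro z
    obtain ⟨q, rfl⟩ := Submodule.mkQ_surjective _ z
    obtain ⟨⟨x, y⟩, rfl⟩ := Submodule.mkQ_surjective _ q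
    refine ⟨y, ?_⟩
    show S.mkQ (N.mkQ (0, y)) = S.mkQ (N.mkQ (x, y))
    simp only [Submodule.mkQ_apply]
    rw [eq_comm, Submodule.Quotient.eq]
    refine ⟨x, ?_⟩
    show N.mkQ (x, 0) = N.mkQ (x, y) - N.mkQ (0, y)
    rw [← map_sub]
    congr 1
    simp
  have finQS : (associatedPrimes R (((X × Y) ⧸ N) ⧸ S)).Finite :=
    (hY.of_surjective h hhs).finite_associatedPrimes
  exact Set.Finite.subset (finS.union finQS) (associatedPrimes_subset_union S)

theorem WeaklyLaskerian.of_subsingleton [Subsingleton X] : WeaklyLaskerian R X := by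
  intro N
  haveI : Subsingleton (X ⧸ N) := Quotient.instSubsingletonQuotient _
  rw [associatedPrimes.eq_empty_of_subsingleton]
  exact Set.finite_empty

theorem WeaklyLaskerian.pi [IsNoetherianRing R] (hX : WeaklyLaskerian R X) (n : ℕ) :
    WeaklyLaskerian R (Fin n → X) := by
  induction n with
  | zero => exact WeaklyLaskerian.of_subsingleton
  | succ n ih =>
      refine (hX.prod ih).of_equiv (LinearEquiv.symm ?_)
      exact
        { toFun := fun f => (f 0, fun i => f i.succ)
          invFun := fun p => Fin.cons p.1 p.2
          map_add' := fun f g => rfl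
          map_smul' := fun c f => rfl
          left_inv := fun f => (Fin.cons_self_tail f)
          right_inv := fun p => by
            refine Prod.ext ?_ (funext fun i => ?_) <;> simp }
end WL

section Tensor
open TensorProduct
variable {R M : Type*} [CommRing R] [AddCommGroup M] [Module R M]

theorem WeaklyLaskerian.tensor [IsNoetherianRing R] (hM : WeaklyLaskerian R M)
    (N : Type*) [AddCommGroup N] [Module R N] [Module.Finite R N] :
    WeaklyLaskerian R (N ⊗[R] M) := by
  obtain ⟨n, f, hf⟩ := Module.Finite.exists_fin' R N
  have e1 : (Fin n → M) ≃ₗ[R] M ⊗[R] (Fin n → R) :=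
    (TensorProduct.piScalarRight R R M (Fin n)).symm
  have e2 : M ⊗[R] (Fin n → R) ≃ₗ[R] (Fin n → R) ⊗[R] M := TensorProduct.comm R _ _
  have base : WeaklyLaskerian R ((Fin n → R) ⊗[R] M) := ((hM.pi n).of_equiv e1).of_equiv e2
  exact base.of_surjective (LinearMap.rTensor M f) (LinearMap.rTensor_surjective M hf)

end Tensor

section Cat

open CategoryTheory CategoryTheory.Limits MonoidalCategory

variable {R : Type} [CommRing R] {M : Type} [AddCommGroup M] [Module R M]

/-- Homology of the complex `X ⊗ P` vanishes in positive degrees when `X` is flat. -/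
theorem isZero_homology_tensor_flat (P : ProjectiveResolution (ModuleCat.of R M))
    (X : ModuleCat.{0} R) [Module.Flat R X] (n : ℕ) :
    IsZero (((((tensoringLeft (ModuleCat.{0} R)).obj X).mapHomologicalComplex
      (ComplexShape.down ℕ)).obj P.complex).homology (n + 1)) := by
  rw [← HomologicalComplex.exactAt_iff_isZero_homology]
  rw [HomologicalComplex.exactAt_iff]
  have h1 : (P.complex.sc (n + 1)).Exact :=
    (HomologicalComplex.exactAt_iff _ _).1 (P.complex_exactAt_succ n)
  have h2 := Module.Flat.lTensor_shortComplex_exact X (P.complex.sc (n + 1)) h1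
  exact ShortComplex.exact_of_iso
    (ShortComplex.isoMk (Iso.refl _) (Iso.refl _) (Iso.refl _) (by rfl) (by rfl)) h2

/-- The key dimension-shifting monomorphism. -/
theorem exists_injective_tor_succ (S : ShortComplex (ModuleCat.{0} R)) (hS : S.ShortExact)
    [Module.Flat R S.X₂] (j : ℕ) :
    ∃ f : ((((tensoringLeft (ModuleCat.{0} R)).obj S.X₃).leftDerived (j + 1)).obj
        (ModuleCat.of R M)) →ₗ[R]
        ((((tensoringLeft (ModuleCat.{0} R)).obj S.X₁).leftDerived j).obj (ModuleCat.of R M)),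
      Function.Injective f := by
  obtain ⟨P⟩ := (inferInstance : HasProjectiveResolution (ModuleCat.of R M)).out
  -- the short complex of homological complexes
  let σ : ShortComplex (HomologicalComplex (ModuleCat.{0} R) (ComplexShape.down ℕ)) :=
    ShortComplex.mk
      ((NatTrans.mapHomologicalComplex ((tensoringLeft _).map S.f) (ComplexShape.down ℕ)).app
        P.complex)
      ((NatTrans.mapHomologicalComplex ((tensoringLeft _).map S.g) (ComplexShape.down ℕ)).app
        P.complex)
      (by
        ext n : 1
        dsimp
        show S.f ▷ P.complex.X n ≫ S.g ▷ P.complex.X n = 0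
        rw [← MonoidalCategory.comp_whiskerRight, S.zero, MonoidalPreadditive.zero_whiskerRight])
  have hσ : σ.ShortExact := by
    rw [HomologicalComplex.shortExact_iff_degreewise_shortExact]
    intro n
    haveI : Projective (P.complex.X n) := P.projective n
    haveI : Module.Projective R (P.complex.X n) := by
      rw [IsProjective.iff_projective]
      exact (inferInstanceAs (Projective (P.complex.X n)))
    haveI : Module.Flat R (P.complex.X n) := inferInstance
    refine ShortComplex.shortExact_of_iso
      (ShortComplex.isoMk (Iso.refl _) (Iso.refl _) (Iso.refl _) (by rfl) (by rfl) :
        S.map (tensorRight (P.complex.X n)) ≅ _) ?_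
    have hex : (S.map (tensorRight (P.complex.X n))).Exact :=
      Module.Flat.rTensor_shortComplex_exact _ S hS.exact
    have hmono : Mono (S.map (tensorRight (P.complex.X n))).f := by
      haveI := hS.mono_f
      rw [ModuleCat.mono_iff_injective]
      exact Module.Flat.rTensor_preserves_injective_linearMap S.f.hom
        ((ModuleCat.mono_iff_injective S.f).1 hS.mono_f)
    have hepi : Epi (S.map (tensorRight (P.complex.X n))).g := by
      rw [ModuleCat.epi_iff_surjective]
      exact LinearMap.rTensor_surjective _ ((ModuleCat.epi_iff_surjective S.g).1 hS.epi_g)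
    exact ShortComplex.ShortExact.mk' hex hmono hepi
  have hij : (ComplexShape.down ℕ).Rel (j + 1) j := by simp
  have hzero : IsZero (σ.X₂.homology (j + 1)) := isZero_homology_tensor_flat P S.X₂ j
  haveI hmono : Mono (hσ.δ (j + 1) j hij) := by
    refine (hσ.homology_exact₃ (j + 1) j hij).mono_g ?_
    exact hzero.eq_zero_of_src _
  let m := (P.isoLeftDerivedObj ((tensoringLeft _).obj S.X₃) (j + 1)).hom ≫ hσ.δ (j + 1) j hij ≫
    (P.isoLeftDerivedObj ((tensoringLeft _).obj S.X₁) j).inv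
  haveI : Mono m := by
    haveI : Mono (hσ.δ (j + 1) j hij ≫ (P.isoLeftDerivedObj ((tensoringLeft _).obj S.X₁) j).inv) :=
      @mono_comp _ _ _ _ _ _ hmono _
        (@IsIso.mono_of_iso _ _ _ _ _ (Iso.isIso_inv (P.isoLeftDerivedObj ((tensoringLeft _).obj S.X₁) j)))
    exact @mono_comp _ _ _ _ _ _
      (@IsIso.mono_of_iso _ _ _ _ _ (Iso.isIso_hom (P.isoLeftDerivedObj ((tensoringLeft _).obj S.X₃) (j + 1)))) _ this
  exact ⟨m.hom, (ModuleCat.mono_iff_injective m).1 this⟩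

end Cat

section Main

open CategoryTheory CategoryTheory.Limits MonoidalCategory

/-- If `M` is weakly Laskerian and `N` is finitely generated, then
`Tor^R_i(N, M)` is weakly Laskerian for all `i ≥ 0`. -/
theorem weaklyLaskerian_tor
    {R : Type} [CommRing R] [IsNoetherianRing R]
    {M N : Type} [AddCommGroup M] [Module R M] [AddCommGroup N] [Module R N]
    (hM : WeaklyLaskerian R M) (hN : Module.Finite R N) (i : ℕ) :
    WeaklyLaskerian R
      (((Tor (ModuleCat.{0} R) i).obj (ModuleCat.of R N)).obj (ModuleCat.of R M)) := by
  suffices h : ∀ i : ℕ, ∀ N' : ModuleCat.{0} R, Module.Finite R N' →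
      WeaklyLaskerian R
        ((((tensoringLeft (ModuleCat.{0} R)).obj N').leftDerived i).obj (ModuleCat.of R M)) by
    exact h i (ModuleCat.of R N) hN
  intro i
  induction i with
  | zero =>
      intro N' hfin
      haveI : PreservesFiniteColimits ((tensoringLeft (ModuleCat.{0} R)).obj N') :=
        letI : PreservesColimits (tensorLeft N') := inferInstance
        PreservesColimits.preservesFiniteColimits (tensorLeft N')
      have e : (((tensoringLeft (ModuleCat.{0} R)).obj N').leftDerived 0).obj
            (ModuleCat.of R M) ≅ ((tensoringLeft (ModuleCat.{0} R)).obj N').obj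
            (ModuleCat.of R M) :=
        (Functor.leftDerivedZeroIsoSelf ((tensoringLeft (ModuleCat.{0} R)).obj N')).app
          (ModuleCat.of R M)
      haveI := hfin
      exact (hM.tensor (N' : Type)).of_equiv e.toLinearEquiv.symm
  | succ j ih =>
      intro N' hfin
      obtain ⟨n, f, hf⟩ := Module.Finite.exists_fin' R (N' : Type)
      let F : ModuleCat.{0} R := ModuleCat.of R (Fin n → R)
      let L : ModuleCat.{0} R := ModuleCat.of R (LinearMap.ker f)
      let S : ShortComplex (ModuleCat.{0} R) :=
        ShortComplex.mk (X₁ := L) (X₂ := F) (X₃ := N')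
          (ModuleCat.ofHom (LinearMap.ker f).subtype) (ModuleCat.ofHom f)
          (by ext x; exact x.2)
      have hS : S.ShortExact := by
        refine ShortComplex.ShortExact.mk' ?_ ?_ ?_
        · rw [ShortComplex.moduleCat_exact_iff]
          intro x hx
          exact ⟨⟨x, hx⟩, rfl⟩
        · rw [ModuleCat.mono_iff_injective]
          exact Subtype.val_injective
        · rw [ModuleCat.epi_iff_surjective]
          exact hf
      haveI : Module.Flat R S.X₂ := inferInstanceAs (Module.Flat R (Fin n → R))
      obtain ⟨g, hg⟩ := exists_injective_tor_succ (M := M) S hS j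
      haveI : Module.Finite R S.X₁ := by
        show Module.Finite R ↥(LinearMap.ker f)
        rw [Module.Finite.iff_fg]
        exact IsNoetherian.noetherian _
      exact (ih S.X₁ inferInstance).of_injective g hg

end Main
end

section
/- If every quotient module of an R-module M has finite Goldie dimension, then M is weakly Laskerian. -/
/-- An `R`-module `M` has finite Goldie dimension if it does not contain an
infinite direct sum of nonzero submodules. -/
def FiniteGoldieDimension (R M : Type*) [CommRing R] [AddCommGroup M]
    [Module R M] : Prop :=
  ¬ ∃ f : ℕ → Submodule R M, (∀ n, f n ≠ ⊥) ∧ iSupIndep f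

/-- Auxiliary: if `x i` has annihilator exactly the prime `p i`, with the `p i`
pairwise distinct, then any vanishing finite sum of nonzero elements of the
cyclic modules `R ∙ x i` must be empty. -/
lemma sum_eq_zero_aux {R Q : Type*} [CommRing R] [AddCommGroup Q] [Module R Q]
    {ι : Type*} [DecidableEq ι] (p : ι → Ideal R) (hp : ∀ i, (p i).IsPrime)
    (hinj : Function.Injective p)
    (x : ι → Q) (hx : ∀ i a, a • x i = 0 ↔ a ∈ p i) :
    ∀ t : Finset ι, ∀ y : ι → Q,
      (∀ i ∈ t, y i ∈ Submodule.span R {x i}) → (∀ i ∈ t, y i ≠ 0) →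
      (∑ i ∈ t, y i) = 0 → t = ∅ := by
  classical
  intro t
  induction t using Finset.strongInduction with
  | _ t ih =>
    intro y hmem hne hsum
    by_contra hte
    have htne : t.Nonempty := Finset.nonempty_of_ne_empty hte
    -- helper 1 : elements of p i kill elements of span {x i}
    have h1 : ∀ i, ∀ z ∈ Submodule.span R {x i}, ∀ a ∈ p i, a • z = 0 := by
      intro i z hz a ha
      obtain ⟨b, rfl⟩ := Submodule.mem_span_singleton.mp hz
      rw [smul_comm, (hx i a).mpr ha, smul_zero]
    -- helper 2 : killers of nonzero elements of span {x i} lie in p i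
    have h2 : ∀ i, ∀ z ∈ Submodule.span R {x i}, z ≠ 0 → ∀ a, a • z = 0 → a ∈ p i := by
      intro i z hz hz0 a haz
      obtain ⟨b, rfl⟩ := Submodule.mem_span_singleton.mp hz
      have hb : b ∉ p i := fun hb => hz0 ((hx i b).mpr hb)
      rw [smul_smul] at haz
      rcases (hp i).mem_or_mem ((hx i (a * b)).mp haz) with h | h
      · exact h
      · exact absurd h hb
    -- pick j ∈ t with p j maximal among {p i : i ∈ t}
    obtain ⟨P, hPmem, hPmax⟩ := (t.image p).exists_maximal (htne.image p)
    obtain ⟨j, hjt, hjP⟩ := Finset.mem_image.mp hPmem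
    subst hjP
    -- prime avoidance : find a ∈ p j not in any p i, i ∈ t.erase j
    have hnotsub : ¬ ((p j : Set R) ⊆ ⋃ i ∈ ((t.erase j : Finset ι) : Set ι), (p i : Set R)) := by
      rw [Ideal.subset_union_prime j j (fun i hi _ _ => hp i)]
      rintro ⟨i, hi, hle⟩
      have hij : i ≠ j := (Finset.mem_erase.mp hi).1
      have hit : i ∈ t := (Finset.mem_erase.mp hi).2
      have hnlt : ¬ p j < p i := fun hlt => hlt.not_ge (hPmax (Finset.mem_image_of_mem p hit) hlt.le)
      rcases lt_or_eq_of_le hle with hlt | heq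
      · exact hnlt hlt
      · exact hij (hinj heq.symm)
    obtain ⟨a, haj, hani⟩ := Set.not_subset.mp hnotsub
    have hani' : ∀ i ∈ t.erase j, a ∉ p i := by
      intro i hi hai
      exact hani (Set.mem_biUnion hi hai)
    -- multiply the relation by a
    have hsum' : (∑ i ∈ t.erase j, a • y i) = 0 := by
      have h0 : a • (∑ i ∈ t, y i) = 0 := by rw [hsum, smul_zero]
      rw [Finset.smul_sum, ← Finset.insert_erase hjt,
        Finset.sum_insert (Finset.notMem_erase j t),
        h1 j (y j) (hmem j hjt) a haj, zero_add] at h0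
      exact h0
    have herase : t.erase j = ∅ := by
      refine ih (t.erase j) (Finset.erase_ssubset hjt) (fun i => a • y i)
        (fun i hi => Submodule.smul_mem _ a (hmem i (Finset.mem_of_mem_erase hi)))
        (fun i hi hzero => ?_) hsum'
      exact hani' i hi
        (h2 i (y i) (hmem i (Finset.mem_of_mem_erase hi))
          (hne i (Finset.mem_of_mem_erase hi)) a hzero)
    -- then t = {j}, so the sum is y j = 0, contradiction
    have : t = {j} := by
      rw [← Finset.insert_erase hjt, herase]; rfl
    rw [this, Finset.sum_singleton] at hsum
    exact hne j hjt hsum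

/-- If every quotient of `M` has finite Goldie dimension, then `M` is weakly
Laskerian. -/
theorem weaklyLaskerian_of_quotients_finiteGoldieDimension
    {R M : Type*} [CommRing R] [IsNoetherianRing R]
    [AddCommGroup M] [Module R M]
    (h : ∀ N : Submodule R M, FiniteGoldieDimension R (M ⧸ N)) :
    WeaklyLaskerian R M := by
  intro N
  by_contra hinf
  have hinf' : (associatedPrimes R (M ⧸ N)).Infinite := hinf
  classical
  let e := hinf'.natEmbedding
  set Q := M ⧸ N with hQ
  let p : ℕ → Ideal R := fun n => (e n : Ideal R)
  have hassoc : ∀ n, IsAssociatedPrime (p n) Q := fun n => (e n).2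
  have hpinj : Function.Injective p := fun m n hmn =>
    e.injective (Subtype.ext hmn)
  have hp : ∀ n, (p n).IsPrime := fun n => (hassoc n).1
  choose x hxp using fun n => (isAssociatedPrime_iff.mp (hassoc n)).2
  have hx : ∀ n a, a • x n = 0 ↔ a ∈ p n := by
    intro n a
    rw [hxp n, Submodule.mem_colon_singleton, Submodule.mem_bot]
  have hx0 : ∀ n, x n ≠ 0 := by
    intro n hn
    apply (hp n).ne_top
    rw [hxp n, hn]
    ext r
    simp [Submodule.mem_colon_singleton]
  refine h N ⟨fun n => Submodule.span R {x n}, fun n hn =>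
    hx0 n (Submodule.span_singleton_eq_bot.mp hn), ?_⟩
  rw [iSupIndep_def]
  intro j
  rw [Submodule.disjoint_def]
  intro y hyj hysup
  by_contra hy0
  rw [iSup_subtype'] at hysup
  rw [Submodule.mem_iSup_iff_exists_finsupp] at hysup
  obtain ⟨f, hf, hfsum⟩ := hysup
  -- build the finset and function for the auxiliary lemma
  set t : Finset ℕ := insert j (f.support.image Subtype.val) with ht
  have hjimg : j ∉ f.support.image Subtype.val := by
    intro hmemj
    obtain ⟨i, _, hval⟩ := Finset.mem_image.mp hmemj
    exact i.2 hval
  set y' : ℕ → Q := fun i =>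
    if hij : i = j then -y else f ⟨i, hij⟩ with hy'
  have hy'j : y' j = -y := by simp [hy']
  have hy'i : ∀ (i : {i : ℕ // i ≠ j}), y' i.val = f i := by
    rintro ⟨i, hij⟩
    simp [hy', hij]
  have hmem : ∀ i ∈ t, y' i ∈ Submodule.span R {x i} := by
    intro i hi
    rcases Finset.mem_insert.mp hi with rfl | hi'
    · rw [hy'j]; exact Submodule.neg_mem _ hyj
    · obtain ⟨⟨i', hi'j⟩, _, rfl⟩ := Finset.mem_image.mp hi'
      rw [hy'i ⟨i', hi'j⟩]
      exact hf ⟨i', hi'j⟩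
  have hne : ∀ i ∈ t, y' i ≠ 0 := by
    intro i hi
    rcases Finset.mem_insert.mp hi with rfl | hi'
    · rw [hy'j]; exact neg_ne_zero.mpr hy0
    · obtain ⟨⟨i', hi'j⟩, hsup, rfl⟩ := Finset.mem_image.mp hi'
      rw [hy'i ⟨i', hi'j⟩]
      exact Finsupp.mem_support_iff.mp hsup
  have hsum : (∑ i ∈ t, y' i) = 0 := by
    rw [ht, Finset.sum_insert hjimg, hy'j]
    rw [Finset.sum_image (fun a _ b _ hab => Subtype.ext hab)]
    have : (∑ i ∈ f.support, y' i.val) = ∑ i ∈ f.support, f i :=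
      Finset.sum_congr rfl fun i _ => hy'i i
    rw [this]
    have : (∑ i ∈ f.support, f i) = y := hfsum
    rw [this]
    exact neg_add_cancel y
  have := sum_eq_zero_aux p hp hpinj x hx t y' hmem hne hsum
  rw [ht] at this
  exact absurd this (Finset.insert_ne_empty _ _)
end

section
/- If an R-module M has a finitely generated submodule S such that M/S is Artinian, then M is weakly Laskerian. -/
open Submodule

section Aux
variable {R M : Type*} [CommRing R] [AddCommGroup M] [Module R M]


theorem ass_subset_union [IsNoetherianRing R] (N : Submodule R M) :
    associatedPrimes R M ⊆ associatedPrimes R N ∪ associatedPrimes R (M ⧸ N) := by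
  intro p hp'
  obtain ⟨hp, x, hx⟩ := _root_.isAssociatedPrime_iff.mp hp'
  have hmem : ∀ s : R, s ∈ p ↔ s • x = 0 := fun s => by
    rw [hx, Submodule.mem_colon_singleton, Submodule.mem_bot]
  by_cases h : ∀ r : R, r • x ∈ N → r • x = 0
  · right
    refine _root_.isAssociatedPrime_iff.mpr ⟨hp, N.mkQ x, ?_⟩
    ext r
    rw [Submodule.mem_colon_singleton, Submodule.mem_bot, ← map_smul, Submodule.mkQ_apply,
      Submodule.Quotient.mk_eq_zero]
    exact (hmem r).trans ⟨fun hr => hr ▸ N.zero_mem, h r⟩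
  · left
    push_neg at h
    obtain ⟨r, hrN, hr0⟩ := h
    have hrp : r ∉ p := fun hrp => hr0 ((hmem r).mp hrp)
    refine _root_.isAssociatedPrime_iff.mpr ⟨hp, ⟨r • x, hrN⟩, ?_⟩
    ext s
    rw [Submodule.mem_colon_singleton, Submodule.mem_bot]
    have : (s • (⟨r • x, hrN⟩ : N) = 0) ↔ s • r • x = 0 := by
      rw [Subtype.ext_iff]; rfl
    rw [this, ← mul_smul, ← hmem (s * r)]
    exact ⟨fun hs => Ideal.mul_mem_right r p hs,
      fun hsr => ((hp.mem_or_mem hsr).resolve_right hrp)⟩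

theorem ass_finite_of_noetherian [IsNoetherianRing R] [IsNoetherian R M] :
    (associatedPrimes R M).Finite := by
  have key : ∀ N : Submodule R M, (associatedPrimes R (M ⧸ N)).Finite := by
    intro N
    induction N using IsNoetherian.induction with
    | hgt N ih =>
      by_cases htriv : Subsingleton (M ⧸ N)
      · rw [associatedPrimes.eq_empty_of_subsingleton]; exact Set.finite_empty
      · have : Nontrivial (M ⧸ N) := not_subsingleton_iff_nontrivial.mp htriv
        obtain ⟨p, hp⟩ := associatedPrimes.nonempty R (M ⧸ N)
        obtain ⟨hpp, xb, hx⟩ := _root_.isAssociatedPrime_iff.mp hp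
        obtain ⟨x, rfl⟩ := N.mkQ_surjective xb
        -- x ∉ N since otherwise p = ⊤
        have hxN : x ∉ N := by
          intro hxN
          apply hpp.ne_top
          rw [hx, show N.mkQ x = 0 from (Submodule.Quotient.mk_eq_zero N).mpr hxN,
            eq_top_iff]
          intro r _
          rw [Submodule.mem_colon_singleton, Submodule.mem_bot, smul_zero]
        set N' : Submodule R M := N ⊔ R ∙ x with hN'
        have hlt : N < N' := by
          refine lt_of_le_of_ne le_sup_left (fun h => hxN ?_)
          rw [h]; exact Submodule.mem_sup_right (Submodule.mem_span_singleton_self x)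
        have hfin' := ih N' hlt
        -- Ass(M/N) ⊆ Ass(N'/N) ∪ Ass(M/N')
        have hsub := ass_subset_union (R := R) (M := M ⧸ N) (N'.map N.mkQ)
        have e1 : ((M ⧸ N) ⧸ (N'.map N.mkQ)) ≃ₗ[R] M ⧸ N' :=
          (Submodule.quotientQuotientEquivQuotientSup N N').trans
            (Submodule.quotEquivOfEq _ _ (by rw [hN', ← sup_assoc, sup_idem]))
        have hmap : N'.map N.mkQ = span R {N.mkQ x} := by
          rw [hN', Submodule.map_sup, Submodule.mkQ_map_self, bot_sup_eq,
            Submodule.map_span, Set.image_singleton]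
        have eass : associatedPrimes R ↥(N'.map N.mkQ) = {p} := by
          have e2 : (R ⧸ p) ≃ₗ[R] ↥(N'.map N.mkQ) := by
            rw [hmap]
            refine (Submodule.quotEquivOfEq _ _ ?_).trans
              (Ideal.quotTorsionOfEquivSpanSingleton R (M ⧸ N) (N.mkQ x))
            rw [hx]
            ext r
            rw [Submodule.mem_colon_singleton, Submodule.mem_bot, Ideal.mem_torsionOf_iff]
          rw [← LinearEquiv.AssociatedPrimes.eq e2,
            associatedPrimes.eq_singleton_of_isPrimary hpp.isPrimary, hpp.radical]
        refine Set.Finite.subset (Set.Finite.union (eass ▸ Set.finite_singleton p) ?_) hsub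
        rwa [LinearEquiv.AssociatedPrimes.eq e1]
  have := key ⊥
  have e : (M ⧸ (⊥ : Submodule R M)) ≃ₗ[R] M := Submodule.quotEquivOfEqBot ⊥ rfl
  rwa [LinearEquiv.AssociatedPrimes.eq e] at this


end Aux
section Aux2
variable {R A : Type*} [CommRing R] [AddCommGroup A] [Module R A]

/-- Associated primes of an Artinian module are maximal. -/
theorem isMaximal_of_ass_artinian [IsNoetherianRing R] [IsArtinian R A] {p : Ideal R}
    (hp : p ∈ associatedPrimes R A) : p.IsMaximal := by
  obtain ⟨hpp, x, hx⟩ := _root_.isAssociatedPrime_iff.mp hp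
  have htor : Ideal.torsionOf R A x = p := by
    rw [hx]; ext r
    rw [Submodule.mem_colon_singleton, Submodule.mem_bot, Ideal.mem_torsionOf_iff]
  have e : (R ⧸ p) ≃ₗ[R] (R ∙ x) := by
    rw [← htor]; exact Ideal.quotTorsionOfEquivSpanSingleton R A x
  have h1 : IsArtinian R (R ⧸ p) := isArtinian_of_injective e.toLinearMap e.injective
  haveI : IsArtinianRing (R ⧸ p) := isArtinian_of_tower R h1
  haveI : p.IsPrime := hpp
  haveI : IsDomain (R ⧸ p) := Ideal.Quotient.isDomain p
  haveI : (⊥ : Ideal (R ⧸ p)).IsPrime := Ideal.bot_prime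
  have : (⊥ : Ideal (R ⧸ p)).IsMaximal :=
    IsArtinianRing.isMaximal_of_isPrime (⊥ : Ideal (R ⧸ p))
  exact (Ideal.bot_quotient_isMaximal_iff p).mp this

theorem ass_finite_of_artinian [IsNoetherianRing R] [IsArtinian R A] :
    (associatedPrimes R A).Finite := by
  by_contra hinf
  have hinf' : (associatedPrimes R A).Infinite := hinf
  obtain f := hinf'.natEmbedding
  -- witnesses
  have hw : ∀ n : ℕ, ∃ x : A, ((f n : Ideal R)) = (⊥ : Submodule R A).colon {x} :=
    fun n => (_root_.isAssociatedPrime_iff.mp (f n).2).2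
  choose x hxs using hw
  have hprime : ∀ n, (f n : Ideal R).IsPrime := fun n => (f n).2.1
  have hmax : ∀ n, (f n : Ideal R).IsMaximal := fun n => isMaximal_of_ass_artinian (f n).2
  have hann : ∀ n (r : R), r ∈ (f n : Ideal R) ↔ r • x n = 0 := fun n r => by
    rw [hxs n, Submodule.mem_colon_singleton, Submodule.mem_bot]
  -- the descending chain
  set D : ℕ → Submodule R A := fun k => ⨆ i : ℕ, R ∙ x (i + k) with hD
  have hantitone : ∀ k, D (k + 1) ≤ D k := by
    intro k
    refine iSup_le fun i => ?_
    have : i + (k + 1) = (i + 1) + k := by ring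
    rw [this]
    exact le_iSup (fun j => R ∙ x (j + k)) (i + 1)
  -- key: x k ∉ D (k + 1)
  have hkey : ∀ k, x k ∉ D (k + 1) := by
    intro k hk
    rw [hD] at hk
    rw [Submodule.mem_iSup_iff_exists_finset] at hk
    obtain ⟨s, hs⟩ := hk
    -- pick a i ∈ f (i+k+1) \ f k for i ∈ s
    have hne : ∀ i : ℕ, (f (i + (k + 1)) : Ideal R) ≠ (f k : Ideal R) := by
      intro i h
      have := f.injective (Subtype.ext h)
      omega
    have hpick : ∀ i : ℕ, ∃ a : R, a ∈ (f (i + (k + 1)) : Ideal R) ∧ a ∉ (f k : Ideal R) := by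
      intro i
      by_contra hc
      push_neg at hc
      exact hne i (((hmax (i + (k + 1))).eq_of_le (hmax k).ne_top) fun a ha => hc a ha)
    choose a ha1 ha2 using hpick
    set b : R := ∏ i ∈ s, a i with hb
    have hbk : b ∉ (f k : Ideal R) := by
      intro hbk
      haveI := hprime k
      obtain ⟨i, _, hi⟩ := Ideal.IsPrime.prod_mem_iff.mp hbk
      exact ha2 i hi
    -- b annihilates every generator
    have hbx : b • x k = 0 := by
      have hsle : (⨆ i ∈ s, R ∙ x (i + (k + 1))) ≤
          Submodule.comap (LinearMap.lsmul R A b) ⊥ := by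
        refine iSup_le fun i => iSup_le fun hi => ?_
        rw [Submodule.span_singleton_le_iff_mem]
        simp only [Submodule.mem_comap, LinearMap.lsmul_apply, Submodule.mem_bot]
        have : b ∈ (f (i + (k + 1)) : Ideal R) := by
          obtain ⟨c, hc⟩ := Finset.dvd_prod_of_mem a hi
          rw [hb, hc]
          exact Ideal.mul_mem_right _ _ (ha1 i)
        exact (hann _ b).mp this
      have := hsle hs
      simpa using this
    exact hbk ((hann k b).mpr hbx)
  -- stabilization gives a contradiction
  have hanti : Antitone D := antitone_nat_of_succ_le hantitone
  obtain ⟨n, hn⟩ := IsArtinian.monotone_stabilizes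
    (⟨fun k => OrderDual.toDual (D k), fun i j hij => hanti hij⟩ : ℕ →o (Submodule R A)ᵒᵈ)
  have hx_in : x n ∈ D n := by
    have : x n = x (0 + n) := by rw [Nat.zero_add]
    rw [this]
    exact le_iSup (fun i => R ∙ x (i + n)) 0 (Submodule.mem_span_singleton_self _)
  have : D n = D (n + 1) := hn (n + 1) (Nat.le_succ n)
  exact hkey n (this ▸ hx_in)
end Aux2

/-- If `M` has a finitely generated submodule `S` with `M/S` Artinian, then `M`
is weakly Laskerian. -/
theorem weaklyLaskerian_of_fg_submodule_artinian_quotient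
    {R M : Type*} [CommRing R] [IsNoetherianRing R]
    [AddCommGroup M] [Module R M] (S : Submodule R M)
    (hS : S.FG) (hQ : IsArtinian R (M ⧸ S)) :
    WeaklyLaskerian R M := by
  intro N
  set S' : Submodule R (M ⧸ N) := S.map N.mkQ with hS'
  have hfg : S'.FG := hS.map N.mkQ
  haveI : IsNoetherian R S' := isNoetherian_of_fg_of_noetherian S' hfg
  have e : ((M ⧸ N) ⧸ S') ≃ₗ[R] ((M ⧸ S) ⧸ N.map S.mkQ) :=
    (Submodule.quotientQuotientEquivQuotientSup N S).trans
      ((Submodule.quotEquivOfEq _ _ (sup_comm N S)).trans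
        (Submodule.quotientQuotientEquivQuotientSup S N).symm)
  haveI : IsArtinian R ((M ⧸ N) ⧸ S') :=
    isArtinian_of_injective e.toLinearMap e.injective
  refine Set.Finite.subset (Set.Finite.union ?_ ?_) (ass_subset_union S')
  · exact ass_finite_of_noetherian
  · exact ass_finite_of_artinian
end

section
/- Let a be an ideal of R and M a weakly Laskerian R-module. In the Grothendieck spectral sequence E_2^{p,q} = Ext_R^p(R/a, H_a^q(M)) converging to Ext_R^{p+q}(R/a, M), the limit terms E_∞^{p,q} have finitely many associated primes for all 0 ≤ p ≤ q. -/
open CategoryTheory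

namespace WLAux

variable {R : Type} [CommRing R]
variable {M N : Type} [AddCommGroup M] [Module R M] [AddCommGroup N] [Module R N]

theorem wl_congr (e : M ≃ₗ[R] N) (hM : WeaklyLaskerian R M) : WeaklyLaskerian R N := by
  intro K
  have h1 : (K.comap (e : M →ₗ[R] N)).map (e : M →ₗ[R] N) = K :=
    Submodule.map_comap_eq_of_surjective e.surjective K
  rw [← LinearEquiv.AssociatedPrimes.eq
    (Submodule.Quotient.equiv (K.comap (e : M →ₗ[R] N)) K e h1)]
  exact hM _

theorem wl_of_surjective (f : M →ₗ[R] N) (hf : Function.Surjective f)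
    (hM : WeaklyLaskerian R M) : WeaklyLaskerian R N := by
  intro K
  have hsurj : Function.Surjective (K.mkQ.comp f) :=
    (Submodule.mkQ_surjective K).comp hf
  rw [← LinearEquiv.AssociatedPrimes.eq (LinearMap.quotKerEquivOfSurjective _ hsurj)]
  exact hM _

theorem wl_submodule (hM : WeaklyLaskerian R M) (P : Submodule R M) :
    WeaklyLaskerian R P := by
  intro B
  have hle : B ≤ (B.map P.subtype).comap P.subtype := fun x hx =>
    Submodule.mem_map_of_mem hx
  set φ := Submodule.mapQ B (B.map P.subtype) P.subtype hle with hφ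
  have hinj : Function.Injective φ := by
    rw [← LinearMap.ker_eq_bot, eq_bot_iff]
    rintro x hx
    obtain ⟨x, rfl⟩ := Submodule.Quotient.mk_surjective _ x
    rw [LinearMap.mem_ker, hφ, Submodule.mapQ_apply, Submodule.Quotient.mk_eq_zero] at hx
    obtain ⟨y, hy, hxy⟩ := hx
    rw [Submodule.mem_bot, Submodule.Quotient.mk_eq_zero]
    rwa [show x = y from Subtype.ext hxy.symm]
  exact Set.Finite.subset (hM (B.map P.subtype))
    (associatedPrimes.subset_of_injective (f := φ) hinj)

theorem wl_of_injective (f : M →ₗ[R] N) (hf : Function.Injective f)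
    (hN : WeaklyLaskerian R N) : WeaklyLaskerian R M :=
  wl_congr (LinearEquiv.ofInjective f hf).symm (wl_submodule hN _)

theorem isAssociatedPrime_sub_or_quot {I : Ideal R} (P : Submodule R M)
    (h : IsAssociatedPrime I M) :
    IsAssociatedPrime I P ∨ IsAssociatedPrime I (M ⧸ P) := by
  exact associatedPrimes.subset_union_of_exact P.injective_subtype
    (LinearMap.exact_subtype_mkQ P) h

theorem ass_subset_union (P : Submodule R M) :
    associatedPrimes R M ⊆ associatedPrimes R P ∪ associatedPrimes R (M ⧸ P) :=
  fun _ h => (isAssociatedPrime_sub_or_quot P h).imp id id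

theorem wl_of_sub_quot (P : Submodule R M) (h1 : WeaklyLaskerian R P)
    (h2 : WeaklyLaskerian R (M ⧸ P)) : WeaklyLaskerian R M := by
  intro K
  apply Set.Finite.subset ?_ (ass_subset_union (P.map K.mkQ))
  apply Set.Finite.union
  · have hr : LinearMap.range (K.mkQ.comp P.subtype) = P.map K.mkQ := by
      rw [LinearMap.range_comp, Submodule.range_subtype]
    have e := (K.mkQ.comp P.subtype).quotKerEquivRange
    rw [hr] at e
    rw [← LinearEquiv.AssociatedPrimes.eq e]
    exact h1 _
  · have hmap : (K ⊔ P).map K.mkQ = P.map K.mkQ := by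
      rw [Submodule.map_sup, Submodule.mkQ_map_self, bot_sup_eq]
    have e1 := Submodule.quotientQuotientEquivQuotient K (K ⊔ P) le_sup_left
    have e2 := Submodule.quotientQuotientEquivQuotient P (K ⊔ P) le_sup_right
    rw [hmap] at e1
    rw [LinearEquiv.AssociatedPrimes.eq (e1.trans e2.symm)]
    exact h2 _


noncomputable def kerSndEquiv : (LinearMap.ker (LinearMap.snd R M N)) ≃ₗ[R] M :=
  (LinearEquiv.ofEq _ _ (LinearMap.range_inl R M N)).symm.trans
      (LinearEquiv.ofInjective (LinearMap.inl R M N) LinearMap.inl_injective).symm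

theorem snd_surj : Function.Surjective (LinearMap.snd R M N) := fun y => ⟨(0, y), rfl⟩

def myFinSuccEquiv (k : ℕ) : (Fin (k+1) → M) ≃ₗ[R] M × (Fin k → M) where
  toFun f := (f 0, fun i => f i.succ)
  map_add' f g := rfl
  map_smul' c f := rfl
  invFun p := Fin.cons p.1 p.2
  left_inv f := by
    funext i
    refine Fin.cases ?_ (fun j => ?_) i
    · exact Fin.cons_zero _ _
    · exact Fin.cons_succ _ _ _
  right_inv p := by
    refine Prod.ext ?_ (funext fun j => ?_) <;> simp


theorem wl_prod (hM : WeaklyLaskerian R M) (hN : WeaklyLaskerian R N) :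
    WeaklyLaskerian R (M × N) := by
  refine wl_of_sub_quot (LinearMap.ker (LinearMap.snd R M N)) ?_ ?_
  · exact wl_congr kerSndEquiv.symm hM
  · exact wl_congr (LinearMap.quotKerEquivOfSurjective _ snd_surj).symm hN

theorem wl_pi (hM : WeaklyLaskerian R M) : ∀ k, WeaklyLaskerian R (Fin k → M)
  | 0 => fun K => by
    haveI : Subsingleton ((Fin 0 → M) ⧸ K) :=
      (Submodule.Quotient.mk_surjective K).subsingleton
    rw [associatedPrimes.eq_empty_of_subsingleton]
    exact Set.finite_empty
  | (k+1) => wl_congr (myFinSuccEquiv k).symm (wl_prod hM (wl_pi hM k))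

theorem wl_hom (hM : WeaklyLaskerian R M) (P : Type) [AddCommGroup P] [Module R P]
    [Module.Finite R P] : WeaklyLaskerian R (P →ₗ[R] M) := by
  obtain ⟨k, g, hg⟩ := Module.Finite.exists_fin' R P
  refine wl_of_injective (LinearMap.lcomp R M g) ?_
    (wl_congr (Module.piEquiv (Fin k) R M) (wl_pi hM k))
  intro f₁ f₂ h
  refine LinearMap.ext fun x => ?_
  obtain ⟨y, rfl⟩ := hg x
  exact LinearMap.congr_fun h y



section Res
variable {R : Type} [CommRing R] [IsNoetherianRing R]

structure FCover (X : ModuleCat.{0} R) where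
  k : ℕ
  π : ModuleCat.of R (Fin k → R) ⟶ X
  surj : Function.Surjective π

noncomputable def fcover (X : ModuleCat.{0} R) [Module.Finite R X] : FCover X :=
  ⟨(Module.Finite.exists_fin' R X).choose,
   ModuleCat.ofHom (Module.Finite.exists_fin' R X).choose_spec.choose,
   (Module.Finite.exists_fin' R X).choose_spec.choose_spec⟩

structure Step (R : Type) [CommRing R] where
  X : ModuleCat.{0} R
  Y : ModuleCat.{0} R
  finY : Module.Finite R Y
  d : Y ⟶ X

noncomputable def step (S : Step R) : Step R :=
  haveI := S.finY
  haveI : Module.Finite R (ModuleCat.of R (LinearMap.ker S.d.hom)) :=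
    inferInstanceAs (Module.Finite R (LinearMap.ker S.d.hom))
  { X := S.Y
    Y := ModuleCat.of R (Fin (fcover (ModuleCat.of R (LinearMap.ker S.d.hom))).k → R)
    finY := inferInstanceAs (Module.Finite R (Fin (fcover (ModuleCat.of R (LinearMap.ker S.d.hom))).k → R))
    d := (fcover (ModuleCat.of R (LinearMap.ker S.d.hom))).π ≫
      ModuleCat.ofHom (LinearMap.ker S.d.hom).subtype }

noncomputable def base (Z : ModuleCat.{0} R) [Module.Finite R Z] : Step R :=
  { X := Z
    Y := ModuleCat.of R (Fin (fcover Z).k → R)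
    finY := inferInstanceAs (Module.Finite R (Fin (fcover Z).k → R))
    d := (fcover Z).π }

noncomputable def seq (Z : ModuleCat.{0} R) [Module.Finite R Z] : ℕ → Step R
  | 0 => step (base Z)
  | (n+1) => step (seq Z n)

noncomputable def cX (Z : ModuleCat.{0} R) [Module.Finite R Z] : ℕ → ModuleCat.{0} R
  | 0 => (base Z).Y
  | (n+1) => (seq Z n).Y

noncomputable def cd (Z : ModuleCat.{0} R) [Module.Finite R Z] (n : ℕ) :
    cX Z (n+1) ⟶ cX Z n :=
  match n with
  | 0 => (seq Z 0).d
  | (n+1) => (seq Z (n+1)).d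

theorem step_d_comp (S : Step R) : (step S).d ≫ S.d = 0 := by
  haveI := S.finY
  haveI : Module.Finite R (ModuleCat.of R (LinearMap.ker S.d.hom)) :=
    inferInstanceAs (Module.Finite R (LinearMap.ker S.d.hom))
  apply ModuleCat.hom_ext
  apply LinearMap.ext
  intro x
  show S.d (((fcover (ModuleCat.of R (LinearMap.ker S.d.hom))).π ≫
      ModuleCat.ofHom (LinearMap.ker S.d.hom).subtype) x) = 0
  exact ((fcover (ModuleCat.of R (LinearMap.ker S.d.hom))).π x).2

theorem step_exact (S : Step R) (x : S.Y) (hx : S.d x = 0) :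
    ∃ y, (step S).d y = x := by
  haveI := S.finY
  haveI : Module.Finite R (ModuleCat.of R (LinearMap.ker S.d.hom)) :=
    inferInstanceAs (Module.Finite R (LinearMap.ker S.d.hom))
  obtain ⟨y, hy⟩ := (fcover (ModuleCat.of R (LinearMap.ker S.d.hom))).surj
    ⟨x, LinearMap.mem_ker.mpr hx⟩
  exact ⟨y, congrArg Subtype.val hy⟩

noncomputable def finComplex (Z : ModuleCat.{0} R) [Module.Finite R Z] :
    ChainComplex (ModuleCat.{0} R) ℕ :=
  ChainComplex.of (cX Z) (cd Z) (fun n => by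
    cases n with
    | zero => exact step_d_comp (seq Z 0)
    | succ m => exact step_d_comp (seq Z (m+1)))

end Res

section Res2
variable {R : Type} [CommRing R] [IsNoetherianRing R]
variable (Z : ModuleCat.{0} R) [Module.Finite R Z]

theorem finComplex_d (n : ℕ) : (finComplex Z).d (n+1) n = cd Z n := by
  unfold finComplex
  exact ChainComplex.of_d _ _ n

instance finComplex_projective (n : ℕ) : Projective ((finComplex Z).X n) := by
  match n with
  | 0 =>
    exact ModuleCat.projective_of_free.{0,0} (M := (base Z).Y) (Pi.basisFun R (Fin (fcover Z).k))
  | 1 => exact ModuleCat.projective_of_free.{0,0} (M := (seq Z 0).Y) (Pi.basisFun R _)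
  | (m+2) => exact ModuleCat.projective_of_free.{0,0} (M := (seq Z (m+1)).Y) (Pi.basisFun R _)

instance finComplex_finite (n : ℕ) : Module.Finite R ((finComplex Z).X n) := by
  match n with
  | 0 => exact inferInstanceAs (Module.Finite R (Fin (fcover Z).k → R))
  | 1 => exact (seq Z 0).finY
  | (m+2) => exact (seq Z (m+1)).finY

theorem finComplex_exactAt_succ (n : ℕ) : (finComplex Z).ExactAt (n+1) := by
  rw [HomologicalComplex.exactAt_iff' _ (n + 1 + 1) (n + 1) n (by simp) (by simp)]
  rw [ShortComplex.moduleCat_exact_iff]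
  dsimp [HomologicalComplex.sc', HomologicalComplex.shortComplexFunctor']
  simp only [finComplex, ChainComplex.of_d]
  intro x hx
  cases n with
  | zero => exact step_exact (seq Z 0) x hx
  | succ m => exact step_exact (seq Z (m+1)) x hx

noncomputable def finRes : ProjectiveResolution Z where
  complex := finComplex Z
  π := (ChainComplex.toSingle₀Equiv _ _).symm ⟨(fcover Z).π, by
    show (finComplex Z).d 1 0 ≫ (fcover Z).π = 0
    rw [show (finComplex Z).d 1 0 = cd Z 0 from finComplex_d Z 0]
    exact step_d_comp (base Z)⟩
  quasiIso := ⟨fun n => by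
    cases n with
    | zero =>
      rw [ChainComplex.quasiIsoAt₀_iff, ShortComplex.quasiIso_iff_of_zeros']
      · have hex : (ShortComplex.mk (cd Z 0) (fcover Z).π (step_d_comp (base Z))).Exact := by
          rw [ShortComplex.moduleCat_exact_iff]
          intro x hx
          exact step_exact (base Z) x hx
        have hepi : Epi (ShortComplex.mk (cd Z 0) (fcover Z).π (step_d_comp (base Z))).g :=
          (ModuleCat.epi_iff_surjective _).2 (fcover Z).surj
        refine (ShortComplex.exact_and_epi_g_iff_of_iso ?_).2 ⟨hex, hepi⟩
        exact ShortComplex.isoMk (Iso.refl _) (Iso.refl _) (Iso.refl _)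
          (by simp only [Iso.refl_hom, Category.id_comp, Category.comp_id]; exact (finComplex_d Z 0).symm) (by erw [Category.id_comp])
      all_goals rfl
    | succ n =>
      rw [quasiIsoAt_iff_exactAt']
      · exact finComplex_exactAt_succ Z n
      · apply ChainComplex.exactAt_succ_single_obj⟩

end Res2

section Glue
variable {R : Type} [CommRing R] [IsNoetherianRing R]

theorem wl_ext (Z : ModuleCat.{0} R) [Module.Finite R Z]
    {M : Type} [AddCommGroup M] [Module R M] (hM : WeaklyLaskerian R M) (n : ℕ) :
    WeaklyLaskerian R
      (((Ext R (ModuleCat.{0} R) n).obj (Opposite.op Z)).obj (ModuleCat.of R M)) := by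
  classical
  set Y : ModuleCat.{0} R := ModuleCat.of R M with hY
  set C := (finRes Z).complex.linearYonedaObj R Y with hC
  set S := C.sc n with hS
  haveI : Module.Finite R ((finRes Z).complex.X n) :=
    inferInstanceAs (Module.Finite R ((finComplex Z).X n))
  have hX2 : WeaklyLaskerian R S.X₂ :=
    wl_congr ModuleCat.homLinearEquiv.symm (wl_hom hM ((finRes Z).complex.X n))
  have hker : WeaklyLaskerian R (LinearMap.ker S.g.hom) := wl_submodule hX2 _
  have hH : WeaklyLaskerian R S.moduleCatLeftHomologyData.H :=
    wl_of_surjective (LinearMap.range S.moduleCatToCycles).mkQ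
      (Submodule.mkQ_surjective _) hker
  have e1 : (((Ext R (ModuleCat.{0} R) n).obj (Opposite.op Z)).obj Y) ≅ S.homology :=
    (finRes Z).isoExt n Y
  exact wl_congr ((e1 ≪≫ S.moduleCatHomologyIso).toLinearEquiv.symm) hH

end Glue

end WLAux

/-- In the Grothendieck spectral sequence
`E_2^{p,q} = Ext^p(R/a, H_a^q(M)) ⟹ Ext^{p+q}(R/a, M)`, for `0 ≤ p ≤ q` the
limit term `E_∞^{p,q}` is the subquotient `φ^p H^{p+q} / φ^{p+1} H^{p+q}` of
`H^{p+q} = Ext_R^{p+q}(R/a, M)` coming from the induced finite filtration.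
Since Mathlib has no Grothendieck spectral sequences, we formalize the
conclusion of the lemma by saying that every such subquotient of
`Ext_R^{p+q}(R/a, M)` (in particular each `E_∞^{p,q}`) has finitely many
associated primes. -/
theorem associatedPrimes_finite_of_spectralSequence_limit
    {R : Type} [CommRing R] [IsNoetherianRing R] (a : Ideal R)
    (M : Type) [AddCommGroup M] [Module R M] (hM : WeaklyLaskerian R M)
    (p q : ℕ) (hpq : p ≤ q)
    (A : Submodule R
      (((Ext R (ModuleCat.{0} R) (p + q)).obj (Opposite.op (ModuleCat.of R (R ⧸ a)))).obj
        (ModuleCat.of R M)))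
    (B : Submodule R A) :
    (associatedPrimes R (A ⧸ B)).Finite := by
  haveI : Module.Finite R (ModuleCat.of R (R ⧸ a)) :=
    inferInstanceAs (Module.Finite R (R ⧸ a))
  have hExt := WLAux.wl_ext (ModuleCat.of R (R ⧸ a)) hM (p + q)
  exact WLAux.wl_submodule hExt A B
end
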